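/- Let W be a wide subcategory of an exact category E. Then the exact structure that W inherits from E coincides with the standard (abelian) exact structure on W; in particular, kernels and cokernels computed in W of any morphism in W agree with the kernel and cokernel of its admissible factorization in E. -/

import Mathlib

open CategoryTheory CategoryTheory.Limits

universe v u

/-- A Quillen exact structure on an additive category `E`: a class of
kernel-cokernel pairs ("conflations"), closed under isomorphisms, containing
the trivial conflations, with inflations and deflations closed under
composition, pushouts of inflations and pullbacks of deflations existing and
again inflations/deflations. -/
structure ExactStruct (E : Type u) [Category.{v} E] [HasZeroMorphisms E] where
  conf : ∀ ⦃X Y Z : E⦄, (X ⟶ Y) → (Y ⟶ Z) → Prop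
  conf_comp : ∀ ⦃X Y Z : E⦄ {f : X ⟶ Y} {g : Y ⟶ Z}, conf f g → f ≫ g = 0
  conf_isKernel : ∀ ⦃X Y Z : E⦄ {f : X ⟶ Y} {g : Y ⟶ Z} (h : conf f g),
    Nonempty (IsLimit (KernelFork.ofι f (conf_comp h)))
  conf_isCokernel : ∀ ⦃X Y Z : E⦄ {f : X ⟶ Y} {g : Y ⟶ Z} (h : conf f g),
    Nonempty (IsColimit (CokernelCofork.ofπ g (conf_comp h)))
  conf_iso : ∀ ⦃X Y Z X' Y' Z' : E⦄ {f : X ⟶ Y} {g : Y ⟶ Z} {f' : X' ⟶ Y'} {g' : Y' ⟶ Z'}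
    (α : X ≅ X') (β : Y ≅ Y') (γ : Z ≅ Z'),
    conf f g → f ≫ β.hom = α.hom ≫ f' → g ≫ γ.hom = β.hom ≫ g' → conf f' g'
  conf_id_left : ∀ (X Z : E), IsZero Z → conf (𝟙 X) (0 : X ⟶ Z)
  conf_id_right : ∀ (Z X : E), IsZero Z → conf (0 : Z ⟶ X) (𝟙 X)
  infl_comp : ∀ ⦃X Y W : E⦄ {f : X ⟶ Y} {f' : Y ⟶ W},
    (∃ (Z : E) (g : Y ⟶ Z), conf f g) → (∃ (Z : E) (g : W ⟶ Z), conf f' g) →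
    ∃ (Z : E) (g : W ⟶ Z), conf (f ≫ f') g
  defl_comp : ∀ ⦃X Y W : E⦄ {g : X ⟶ Y} {g' : Y ⟶ W},
    (∃ (Z : E) (f : Z ⟶ X), conf f g) → (∃ (Z : E) (f : Z ⟶ Y), conf f g') →
    ∃ (Z : E) (f : Z ⟶ X), conf f (g ≫ g')
  infl_pushout : ∀ ⦃X Y X' : E⦄ (f : X ⟶ Y) (t : X ⟶ X'),
    (∃ (Z : E) (g : Y ⟶ Z), conf f g) →
    ∃ (P : E) (inl : Y ⟶ P) (inr : X' ⟶ P),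
      IsPushout f t inl inr ∧ ∃ (Z : E) (g : P ⟶ Z), conf inr g
  defl_pullback : ∀ ⦃Y Z T : E⦄ (d : Y ⟶ Z) (t : T ⟶ Z),
    (∃ (X : E) (f : X ⟶ Y), conf f d) →
    ∃ (P : E) (p1 : P ⟶ Y) (p2 : P ⟶ T),
      IsPullback p1 p2 d t ∧ ∃ (X : E) (f : X ⟶ P), conf f p2

namespace ExactStruct

variable {E : Type u} [Category.{v} E] [HasZeroMorphisms E]

/-- `f` is an inflation (admissible monic): the first map of some conflation. -/
def Inflation (S : ExactStruct E) {X Y : E} (f : X ⟶ Y) : Prop :=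
  ∃ (Z : E) (g : Y ⟶ Z), S.conf f g

/-- `g` is a deflation (admissible epic): the second map of some conflation. -/
def Deflation (S : ExactStruct E) {Y Z : E} (g : Y ⟶ Z) : Prop :=
  ∃ (X : E) (f : X ⟶ Y), S.conf f g

end ExactStruct

/-- `FiltLenP conf C n X` : `X` admits a `C`-filtration of length `n` w.r.t. the
conflation class `conf`, i.e. a chain of inflations `0 = X₀ ↣ ⋯ ↣ Xₙ = X` whose
successive cokernels lie in `C`. -/
inductive FiltLenP {E : Type u} [Category.{v} E]
    (conf : ∀ ⦃X Y Z : E⦄, (X ⟶ Y) → (Y ⟶ Z) → Prop) (C : Set E) : ℕ → E → Prop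
  | zero (X : E) : IsZero X → FiltLenP conf C 0 X
  | step {X Y c : E} (n : ℕ) (f : X ⟶ Y) (g : Y ⟶ c) :
      FiltLenP conf C n X → c ∈ C → conf f g → FiltLenP conf C (n + 1) Y

namespace ExactStruct

variable {E : Type u} [Category.{v} E] [HasZeroMorphisms E]

/-- `Filt C` : the objects admitting a finite `C`-filtration. -/
def Filt (S : ExactStruct E) (C : Set E) : Set E :=
  {X | ∃ n, FiltLenP S.conf C n X}

/-- The conflations of the exact structure induced on the subcategory `W`. -/
def confIn (S : ExactStruct E) (W : Set E) :
    ∀ ⦃X Y Z : E⦄, (X ⟶ Y) → (Y ⟶ Z) → Prop :=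
  fun X Y Z f g => S.conf f g ∧ X ∈ W ∧ Y ∈ W ∧ Z ∈ W

/-- A simple object of the exact category `E`. -/
def Simple (S : ExactStruct E) (M : E) : Prop :=
  ¬ IsZero M ∧ ∀ ⦃L N : E⦄ (f : L ⟶ M) (g : M ⟶ N), S.conf f g → IsZero L ∨ IsZero N

/-- A simple object of the extension-closed subcategory `W` with its induced
exact structure. -/
def SimpleIn (S : ExactStruct E) (W : Set E) (M : E) : Prop :=
  M ∈ W ∧ ¬ IsZero M ∧
    ∀ ⦃L N : E⦄ (f : L ⟶ M) (g : M ⟶ N), S.confIn W f g → IsZero L ∨ IsZero N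

/-- `E` is a length exact category: every object has a finite filtration with
simple subquotients. -/
def IsLength (S : ExactStruct E) : Prop :=
  ∀ X : E, ∃ n, FiltLenP S.conf {M | S.Simple M} n X

/-- The subcategory `W` (with its induced exact structure) is length. -/
def IsLengthIn (S : ExactStruct E) (W : Set E) : Prop :=
  ∀ X ∈ W, ∃ n, FiltLenP (S.confIn W) {M | S.SimpleIn W M} n X

/-- The inclusion of the full subcategory `W` into `E` is exact: every short
exact sequence in (the abelian category) `W` is a conflation of `E`. -/
def InclusionExact (S : ExactStruct E) (W : Set E)
    [Abelian (ObjectProperty.FullSubcategory fun X => X ∈ W)] : Prop :=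
  ∀ (A B C : ObjectProperty.FullSubcategory fun X => X ∈ W) (f : A ⟶ B) (g : B ⟶ C)
    (w : f ≫ g = 0), (ShortComplex.mk f g w).ShortExact → S.conf f.hom g.hom

/-- `W` is a wide subcategory of `E`: closed under extensions, abelian, and the
inclusion is exact. -/
def IsWide (S : ExactStruct E) (W : Set E) : Prop :=
  (∀ ⦃X Y Z : E⦄ (f : X ⟶ Y) (g : Y ⟶ Z), S.conf f g → X ∈ W → Z ∈ W → Y ∈ W) ∧
  ∃ inst : Abelian (ObjectProperty.FullSubcategory fun X => X ∈ W),
    @InclusionExact E _ _ S W inst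

end ExactStruct

/-- A brick: a nonzero object all of whose nonzero endomorphisms are
isomorphisms (i.e. the endomorphism ring is a division ring). -/
def Brick {E : Type u} [Category.{v} E] [HasZeroMorphisms E] (X : E) : Prop :=
  𝟙 X ≠ 0 ∧ ∀ f : X ⟶ X, f ≠ 0 → IsIso f

/-- A semibrick: a set of bricks which are pairwise Hom-orthogonal
(no nonzero morphisms between non-isomorphic members). -/
def Semibrick {E : Type u} [Category.{v} E] [HasZeroMorphisms E] (𝒮 : Set E) : Prop :=
  (∀ X ∈ 𝒮, Brick X) ∧
  ∀ X ∈ 𝒮, ∀ Y ∈ 𝒮, IsEmpty (X ≅ Y) → ∀ f : X ⟶ Y, f = 0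

/-- A class of objects closed under isomorphisms. -/
def IsoClosed {E : Type u} [Category.{v} E] (C : Set E) : Prop :=
  ∀ X Y : E, Nonempty (X ≅ Y) → X ∈ C → Y ∈ C

/-- Composite of a chain of morphisms `obj i ⟶ obj (i+1)`. -/
def comps {E : Type u} [Category.{v} E] (obj : ℕ → E)
    (ι : ∀ i, obj i ⟶ obj (i + 1)) (i : ℕ) : ∀ j, obj i ⟶ obj (i + j)
  | 0 => 𝟙 _
  | j + 1 => comps obj ι i j ≫ ι (i + j)

set_option linter.unusedSectionVars false

section AuxWide
variable {E : Type u} [Category.{v} E] [HasZeroMorphisms E] {W : Set E}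

def restrictedZeros (W : Set E) : HasZeroMorphisms (ObjectProperty.FullSubcategory fun X => X ∈ W) where
  zero X Y := ⟨ObjectProperty.homMk (0 : X.obj ⟶ Y.obj)⟩
  comp_zero := by intros; ext; exact comp_zero
  zero_comp := by intros; ext; exact zero_comp

lemma zero_eqE [I : HasZeroMorphisms (ObjectProperty.FullSubcategory fun X => X ∈ W)]
    {X Y : ObjectProperty.FullSubcategory fun X => X ∈ W} :
    (0 : X ⟶ Y).hom = 0 := by
  have h : I = restrictedZeros W := Subsingleton.elim _ _
  subst h; rfl

variable [I0 : HasZeroMorphisms (ObjectProperty.FullSubcategory fun X => X ∈ W)]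

noncomputable def kernelIn {K A B : ObjectProperty.FullSubcategory fun X => X ∈ W}
    {k : K ⟶ A} {g : A ⟶ B} (w : k ≫ g = 0)
    {wE : k.hom ≫ g.hom = 0}
    (hE : IsLimit (KernelFork.ofι _ wE)) : IsLimit (KernelFork.ofι k w) :=
  KernelFork.IsLimit.ofι k w
    (fun {W'} g' hg' => ObjectProperty.homMk (KernelFork.IsLimit.lift' hE g'.hom
      ((congrArg (fun (x : W' ⟶ B) => x.hom) hg').trans zero_eqE)).1)
    (fun {W'} g' hg' => InducedCategory.hom_ext (KernelFork.IsLimit.lift' hE g'.hom _).2)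
    (fun {W'} g' hg' m hm => by
      apply InducedCategory.hom_ext
      apply Fork.IsLimit.hom_ext hE
      exact (congrArg (fun (x : W' ⟶ A) => x.hom) hm).trans
        ((KernelFork.IsLimit.lift' hE g'.hom _).2).symm)

noncomputable def cokernelIn {A B Q : ObjectProperty.FullSubcategory fun X => X ∈ W}
    {f : A ⟶ B} {c : B ⟶ Q} (w : f ≫ c = 0)
    {wE : f.hom ≫ c.hom = 0}
    (hE : IsColimit (CokernelCofork.ofπ _ wE)) : IsColimit (CokernelCofork.ofπ c w) :=
  CokernelCofork.IsColimit.ofπ c w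
    (fun {W'} c' hc' => ObjectProperty.homMk (CokernelCofork.IsColimit.desc' hE c'.hom
      ((congrArg (fun (x : A ⟶ W') => x.hom) hc').trans zero_eqE)).1)
    (fun {W'} c' hc' => InducedCategory.hom_ext (CokernelCofork.IsColimit.desc' hE c'.hom _).2)
    (fun {W'} c' hc' m hm => by
      apply InducedCategory.hom_ext
      apply Cofork.IsColimit.hom_ext hE
      exact (congrArg (fun (x : B ⟶ W') => x.hom) hm).trans
        ((CokernelCofork.IsColimit.desc' hE c'.hom _).2).symm)

lemma monoIn {A B : ObjectProperty.FullSubcategory fun X => X ∈ W} {f : A ⟶ B}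
    (h : Mono f.hom) : Mono f :=
  ⟨fun u v huv => InducedCategory.hom_ext
    (h.right_cancellation _ _ (congrArg (fun x => x.hom) huv))⟩

lemma epiIn {A B : ObjectProperty.FullSubcategory fun X => X ∈ W} {f : A ⟶ B}
    (h : Epi f.hom) : Epi f :=
  ⟨fun u v huv => InducedCategory.hom_ext
    (h.left_cancellation _ _ (congrArg (fun x => x.hom) huv))⟩


lemma part1aux {E : Type u} [Category.{v} E] [HasZeroMorphisms E] (S : ExactStruct E) (W : Set E)
    [inst : Abelian (ObjectProperty.FullSubcategory fun X => X ∈ W)] (hincl : S.InclusionExact W)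
    (I : HasZeroMorphisms (ObjectProperty.FullSubcategory fun X => X ∈ W)) :
    ∀ (A B C : ObjectProperty.FullSubcategory fun X => X ∈ W) (f : A ⟶ B) (g : B ⟶ C)
      (w : f ≫ g = @OfNat.ofNat _ 0 (@Zero.toOfNat0 _ (@HasZeroMorphisms.zero _ _ I A C))),
      S.conf f.hom g.hom ↔ (@ShortComplex.mk _ _ I _ _ _ f g w).ShortExact := by
  intro A B C f g w
  constructor
  · obtain rfl : I = @Preadditive.preadditiveHasZeroMorphisms _ _ inst.toPreadditive :=
      Subsingleton.elim _ _
    intro hc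
    obtain ⟨hk⟩ := S.conf_isKernel hc
    obtain ⟨hq⟩ := S.conf_isCokernel hc
    have hkW := kernelIn (I0 := _) w hk
    have hm : Mono f := monoIn (mono_of_isLimit_fork hk)
    have he : Epi g := epiIn (epi_of_isColimit_cofork hq)
    exact @ShortComplex.ShortExact.mk _ _ (@Preadditive.preadditiveHasZeroMorphisms _ _ inst.toPreadditive) _
      (ShortComplex.exact_of_f_is_kernel (S := _) hkW) hm he
  · obtain rfl : I = ObjectProperty.instHasZeroMorphismsFullSubcategory _ :=
      Subsingleton.elim _ _
    exact hincl A B C f g w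

end AuxWide

/-- For a wide subcategory `W` of `E`, the inherited exact
structure coincides with the standard abelian exact structure on `W`:
conflations of `E` with all terms in `W` are exactly the short exact sequences
of `W`; moreover for any morphism `φ` of `W` with admissible factorization
`φ = ι ∘ π` in `E`, the kernel of the deflation `π` is a kernel of `φ` in `W`
and the cokernel of the inflation `ι` is a cokernel of `φ` in `W`. -/
theorem wide_inherited_is_standard {E : Type u} [Category.{v} E] [Preadditive E]
    [HasZeroObject E] [HasBinaryBiproducts E] (S : ExactStruct E) (W : Set E)
    (hW : S.IsWide W) [inst : Abelian (ObjectProperty.FullSubcategory fun X => X ∈ W)]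
    (hincl : S.InclusionExact W) :
    (∀ (A B C : ObjectProperty.FullSubcategory fun X => X ∈ W) (f : A ⟶ B) (g : B ⟶ C)
        (w : f ≫ g = 0),
      S.conf f.hom g.hom ↔ (ShortComplex.mk f g w).ShortExact) ∧
    (∀ (A B : ObjectProperty.FullSubcategory fun X => X ∈ W) (φ : A ⟶ B)
        (M : E) (π : A.obj ⟶ M) (ι : M ⟶ B.obj)
        (_ : M ∈ W) (_ : S.Deflation π) (_ : S.Inflation ι) (_ : π ≫ ι = φ.hom)
        (K : E) (k : K ⟶ A.obj) (_ : S.conf k π) (hK : K ∈ W)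
        (Q : E) (c : B.obj ⟶ Q) (_ : S.conf ι c) (hQ : Q ∈ W),
      (∃ w₁ : (show (⟨K, hK⟩ : ObjectProperty.FullSubcategory fun X => X ∈ W) ⟶ A from ObjectProperty.homMk k) ≫ φ = 0,
        Nonempty (IsLimit (KernelFork.ofι
          (show (⟨K, hK⟩ : ObjectProperty.FullSubcategory fun X => X ∈ W) ⟶ A from ObjectProperty.homMk k) w₁))) ∧
      (∃ w₂ : φ ≫ (show B ⟶ (⟨Q, hQ⟩ : ObjectProperty.FullSubcategory fun X => X ∈ W) from ObjectProperty.homMk c) = 0,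
        Nonempty (IsColimit (CokernelCofork.ofπ
          (show B ⟶ (⟨Q, hQ⟩ : ObjectProperty.FullSubcategory fun X => X ∈ W) from ObjectProperty.homMk c) w₂)))) := by
  
  constructor
  · exact fun A B C f g w => part1aux S W hincl _ A B C f g w
  · intro A B φ M π ι hM hπ hι hfac K k hkπ hK Q c hιc hQ
    obtain ⟨hkE⟩ := S.conf_isKernel hkπ
    obtain ⟨hqE⟩ := S.conf_isCokernel hιc
    haveI : Mono ι := mono_of_isLimit_fork (S.conf_isKernel hιc).some
    haveI : Epi π := epi_of_isColimit_cofork (S.conf_isCokernel hkπ).some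
    have hφ : φ.hom = π ≫ ι := hfac.symm
    have hkE' := isKernelCompMono hkE ι hφ
    have hqE' := isCokernelEpiComp hqE π hφ
    have e₁ : k ≫ φ.hom = 0 := by
      rw [hφ, ← Category.assoc, S.conf_comp hkπ, zero_comp]
    have e₂ : φ.hom ≫ c = 0 := by
      rw [hφ, Category.assoc, S.conf_comp hιc, comp_zero]
    have w₁ : (show (⟨K, hK⟩ : ObjectProperty.FullSubcategory fun X => X ∈ W) ⟶ A from ObjectProperty.homMk k) ≫ φ = 0 :=
      InducedCategory.hom_ext (e₁.trans (zero_eqE (X := ⟨K, hK⟩) (Y := B)).symm)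
    have w₂ : φ ≫ (show B ⟶ (⟨Q, hQ⟩ : ObjectProperty.FullSubcategory fun X => X ∈ W) from ObjectProperty.homMk c) = 0 :=
      InducedCategory.hom_ext (e₂.trans (zero_eqE (X := A) (Y := ⟨Q, hQ⟩)).symm)
    exact ⟨⟨w₁, ⟨kernelIn w₁ hkE'⟩⟩, ⟨w₂, ⟨cokernelIn w₂ hqE'⟩⟩⟩
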